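/- For every j ∈ ℕ there is a constant C_j, and for every k ∈ ℕ there is a constant C_k, such that whenever r₁ ≥ 1, r₂ ≥ 1, s ≥ 0 and r₁r₂e^s ≥ (max{r₁,r₂})², one has |(d/ds)^j |𝐧_s|| ≤ C_j (r₁r₂e^s)^{1/2} and |(d/ds)^k (1/|𝐧_s|)| ≤ C_k / |𝐧_s|. -/

import Mathlib

open MeasureTheory

/-- `|𝐧_s| = √(r₁² + r₂² + 2 r₁ r₂ cosh s)`. -/
noncomputable def nNorm (r₁ r₂ s : ℝ) : ℝ :=
  Real.sqrt (r₁ ^ 2 + r₂ ^ 2 + 2 * r₁ * r₂ * Real.cosh s)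

open Real
noncomputable def trm (p r₁ r₂ : ℝ) (m n : ℕ) (s : ℝ) : ℝ :=
  (r₁ + r₂ * exp s) ^ (p - (m:ℝ)) * (r₁ + r₂ * exp (-s)) ^ (p - (n:ℝ)) *
  (r₂ * exp s) ^ m * (r₂ * exp (-s)) ^ n

lemma upos {r₁ r₂ s : ℝ} (h1 : 1 ≤ r₁) (h2 : 1 ≤ r₂) : 0 < r₁ + r₂ * exp s := by
  have := exp_pos s; nlinarith

lemma cast_pow_aux (x : ℝ) (m : ℕ) : (m:ℝ) * x ^ (m-1) * x = (m:ℝ) * x ^ m := by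
  cases m with
  | zero => simp
  | succ k => push_cast; simp [pow_succ]; ring

lemma hasDerivAt_trm (p r₁ r₂ : ℝ) (h1 : 1 ≤ r₁) (h2 : 1 ≤ r₂) (m n : ℕ) (s : ℝ) :
    HasDerivAt (trm p r₁ r₂ m n)
      ((p - m) * trm p r₁ r₂ (m+1) n s - (p - n) * trm p r₁ r₂ m (n+1) s
        + ((m:ℝ) - n) * trm p r₁ r₂ m n s) s := by
  have hu : HasDerivAt (fun t => r₁ + r₂ * exp t) (r₂ * exp s) s :=
    ((Real.hasDerivAt_exp s).const_mul r₂).const_add r₁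
  have hvin : HasDerivAt (fun t : ℝ => exp (-t)) (-exp (-s)) s := by
    simpa [Function.comp_def] using (Real.hasDerivAt_exp (-s)).comp s (hasDerivAt_neg s)
  have hv : HasDerivAt (fun t => r₁ + r₂ * exp (-t)) (-(r₂ * exp (-s))) s := by
    simpa [mul_comm, neg_mul, mul_neg] using (hvin.const_mul r₂).const_add r₁
  have hU : HasDerivAt (fun t => (r₁ + r₂ * exp t) ^ (p - (m:ℝ)))
      (r₂ * exp s * (p - m) * (r₁ + r₂ * exp s) ^ (p - (m:ℝ) - 1)) s :=
    hu.rpow_const (Or.inl (upos h1 h2).ne')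
  have hV : HasDerivAt (fun t => (r₁ + r₂ * exp (-t)) ^ (p - (n:ℝ)))
      (-(r₂ * exp (-s)) * (p - n) * (r₁ + r₂ * exp (-s)) ^ (p - (n:ℝ) - 1)) s :=
    hv.rpow_const (Or.inl (upos h1 h2).ne')
  have hX : HasDerivAt (fun t => (r₂ * exp t) ^ m)
      ((m:ℝ) * (r₂ * exp s) ^ (m-1) * (r₂ * exp s)) s :=
    ((Real.hasDerivAt_exp s).const_mul r₂).pow m
  have hY : HasDerivAt (fun t => (r₂ * exp (-t)) ^ n)
      ((n:ℝ) * (r₂ * exp (-s)) ^ (n-1) * (-(r₂ * exp (-s)))) s := by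
    have := ((hvin.const_mul r₂).pow n)
    simpa [Pi.pow_def, mul_comm, mul_neg, neg_mul] using this
  have H := ((hU.fun_mul hV).fun_mul hX).fun_mul hY
  refine H.congr_deriv ?_
  set u := r₁ + r₂ * exp s with hu'
  set v := r₁ + r₂ * exp (-s) with hv'
  have hup := upos (s := s) h1 h2
  have hvp := upos (s := -s) h1 h2
  have e1 : u ^ (p - ((m:ℕ):ℝ) - 1) * (r₂ * exp s) = u ^ (p - ((m+1:ℕ):ℝ)) * (r₂ * exp s) := by
    push_cast; ring_nf
  have e2 : v ^ (p - ((n:ℕ):ℝ) - 1) = v ^ (p - ((n+1:ℕ):ℝ)) := by push_cast; ring_nf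
  simp only [trm, ← hu', ← hv']
  rw [show p - ((m+1:ℕ):ℝ) = p - (m:ℝ) - 1 by push_cast; ring,
      show p - ((n+1:ℕ):ℝ) = p - (n:ℝ) - 1 by push_cast; ring,
      pow_succ, pow_succ]
  have hxm := cast_pow_aux (r₂ * exp s) m
  have hyn := cast_pow_aux (r₂ * exp (-s)) n
  simp only [mul_neg, neg_mul]
  rw [hxm, hyn]
  ring

noncomputable def lsum (p r₁ r₂ : ℝ) (L : List (ℝ × ℕ × ℕ)) (s : ℝ) : ℝ :=
  (L.map fun q => q.1 * trm p r₁ r₂ q.2.1 q.2.2 s).sum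

def Dstep (p : ℝ) (L : List (ℝ × ℕ × ℕ)) : List (ℝ × ℕ × ℕ) :=
  L.flatMap fun q => [(q.1 * (p - q.2.1), q.2.1 + 1, q.2.2),
                   (-(q.1 * (p - q.2.2)), q.2.1, q.2.2 + 1),
                   (q.1 * ((q.2.1 : ℝ) - q.2.2), q.2.1, q.2.2)]

lemma hasDerivAt_lsum (p r₁ r₂ : ℝ) (h1 : 1 ≤ r₁) (h2 : 1 ≤ r₂) (L : List (ℝ × ℕ × ℕ)) (s : ℝ) :
    HasDerivAt (lsum p r₁ r₂ L) (lsum p r₁ r₂ (Dstep p L) s) s := by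
  induction L with
  | nil => exact hasDerivAt_const s (0:ℝ)
  | cons q L ih =>
    have hq := (hasDerivAt_trm p r₁ r₂ h1 h2 q.2.1 q.2.2 s).const_mul q.1
    have : HasDerivAt (lsum p r₁ r₂ (q :: L))
        (q.1 * ((p - q.2.1) * trm p r₁ r₂ (q.2.1+1) q.2.2 s
          - (p - q.2.2) * trm p r₁ r₂ q.2.1 (q.2.2+1) s
          + ((q.2.1:ℝ) - q.2.2) * trm p r₁ r₂ q.2.1 q.2.2 s)
         + lsum p r₁ r₂ (Dstep p L) s) s := by
      simp only [lsum, List.map_cons, List.sum_cons]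
      exact hq.add ih
    convert this using 1
    simp only [Dstep, List.flatMap_cons, lsum, List.map_append, List.sum_append,
      List.map_cons, List.map_nil, List.sum_cons, List.sum_nil]
    ring

lemma iter_repr (p : ℝ) (j : ℕ) :
    ∃ L : List (ℝ × ℕ × ℕ), ∀ r₁ r₂ : ℝ, 1 ≤ r₁ → 1 ≤ r₂ → ∀ s : ℝ,
      iteratedDeriv j (lsum p r₁ r₂ [(1,0,0)]) s = lsum p r₁ r₂ L s := by
  induction j with
  | zero => exact ⟨[(1,0,0)], fun _ _ _ _ _ => by simp⟩
  | succ j ih =>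
    obtain ⟨L, hL⟩ := ih
    refine ⟨Dstep p L, fun r₁ r₂ h1 h2 s => ?_⟩
    rw [iteratedDeriv_succ]
    have : iteratedDeriv j (lsum p r₁ r₂ [(1,0,0)]) = lsum p r₁ r₂ L :=
      funext (hL r₁ r₂ h1 h2)
    rw [this]
    exact (hasDerivAt_lsum p r₁ r₂ h1 h2 L s).deriv

lemma trm_abs_le (p r₁ r₂ : ℝ) (h1 : 1 ≤ r₁) (h2 : 1 ≤ r₂) (m n : ℕ) (s : ℝ) :
    |trm p r₁ r₂ m n s| ≤ ((r₁ + r₂ * exp s) * (r₁ + r₂ * exp (-s))) ^ p := by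
  have hup := upos (s := s) h1 h2
  have hvp := upos (s := -s) h1 h2
  have hX : 0 < r₂ * exp s := by positivity
  have hY : 0 < r₂ * exp (-s) := by positivity
  have htrm : trm p r₁ r₂ m n s
      = ((r₁ + r₂ * exp s) ^ p * (r₁ + r₂ * exp (-s)) ^ p)
        * ((r₂ * exp s) ^ m / (r₁ + r₂ * exp s) ^ m)
        * ((r₂ * exp (-s)) ^ n / (r₁ + r₂ * exp (-s)) ^ n) := by
    rw [trm, Real.rpow_sub hup, Real.rpow_sub hvp, Real.rpow_natCast, Real.rpow_natCast]
    ring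
  rw [htrm, Real.mul_rpow hup.le hvp.le]
  have hb1 : (r₂ * exp s) ^ m / (r₁ + r₂ * exp s) ^ m ≤ 1 := by
    rw [div_le_one (by positivity)]
    exact pow_le_pow_left₀ hX.le (by nlinarith [exp_pos s]) m
  have hb2 : (r₂ * exp (-s)) ^ n / (r₁ + r₂ * exp (-s)) ^ n ≤ 1 := by
    rw [div_le_one (by positivity)]
    exact pow_le_pow_left₀ hY.le (by nlinarith [exp_pos (-s)]) n
  have hA : 0 ≤ (r₁ + r₂ * exp s) ^ p * (r₁ + r₂ * exp (-s)) ^ p := by positivity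
  rw [abs_of_nonneg (by positivity)]
  calc _ ≤ (r₁ + r₂ * exp s) ^ p * (r₁ + r₂ * exp (-s)) ^ p * 1 * 1 := by
        apply mul_le_mul _ hb2 (by positivity) (by positivity)
        apply mul_le_mul le_rfl hb1 (by positivity) hA
    _ = _ := by ring

lemma lsum_abs_le (p r₁ r₂ : ℝ) (h1 : 1 ≤ r₁) (h2 : 1 ≤ r₂) (L : List (ℝ × ℕ × ℕ)) (s : ℝ) :
    |lsum p r₁ r₂ L s| ≤ (L.map fun q => |q.1|).sum
      * ((r₁ + r₂ * exp s) * (r₁ + r₂ * exp (-s))) ^ p := by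
  induction L with
  | nil => simp [lsum]
  | cons q L ih =>
    simp only [lsum, List.map_cons, List.sum_cons] at *
    calc |q.1 * trm p r₁ r₂ q.2.1 q.2.2 s + _| ≤
        |q.1 * trm p r₁ r₂ q.2.1 q.2.2 s| + |(L.map fun q => q.1 * trm p r₁ r₂ q.2.1 q.2.2 s).sum| :=
          abs_add_le _ _
      _ ≤ |q.1| * ((r₁ + r₂ * exp s) * (r₁ + r₂ * exp (-s))) ^ p
          + (L.map fun q => |q.1|).sum * ((r₁ + r₂ * exp s) * (r₁ + r₂ * exp (-s))) ^ p := by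
          apply add_le_add _ ih
          rw [abs_mul]
          exact mul_le_mul_of_nonneg_left (trm_abs_le p r₁ r₂ h1 h2 _ _ s) (abs_nonneg _)
      _ = _ := by ring

lemma nNorm_eq (r₁ r₂ s : ℝ) (h1 : 1 ≤ r₁) (h2 : 1 ≤ r₂) :
    nNorm r₁ r₂ s = (r₁ + r₂ * exp s) ^ ((1:ℝ)/2) * (r₁ + r₂ * exp (-s)) ^ ((1:ℝ)/2) := by
  have hup := upos (s := s) h1 h2
  have hvp := upos (s := -s) h1 h2
  have hid : r₁ ^ 2 + r₂ ^ 2 + 2 * r₁ * r₂ * Real.cosh s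
      = (r₁ + r₂ * exp s) * (r₁ + r₂ * exp (-s)) := by
    have hprod : exp s * exp (-s) = 1 := by rw [← Real.exp_add]; simp
    rw [Real.cosh_eq]
    nlinarith [hprod]
  rw [nNorm, hid, Real.sqrt_mul hup.le, Real.sqrt_eq_rpow, Real.sqrt_eq_rpow]

lemma lsum_base (p r₁ r₂ s : ℝ) :
    lsum p r₁ r₂ [(1,0,0)] s = (r₁ + r₂ * exp s) ^ p * (r₁ + r₂ * exp (-s)) ^ p := by
  simp [lsum, trm]

lemma coefsum_nonneg (L : List (ℝ × ℕ × ℕ)) : 0 ≤ (L.map fun q => |q.1|).sum :=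
  List.sum_nonneg (by simp only [List.mem_map]; rintro x ⟨q, _, rfl⟩; exact abs_nonneg _)

lemma uv_le (r₁ r₂ s : ℝ) (h1 : 1 ≤ r₁) (h2 : 1 ≤ r₂) (hs : 0 ≤ s)
    (hR : (max r₁ r₂) ^ 2 ≤ r₁ * r₂ * exp s) :
    (r₁ + r₂ * exp s) * (r₁ + r₂ * exp (-s)) ≤ 4 * (r₁ * r₂ * exp s) := by
  have hm1 : r₁ ≤ max r₁ r₂ := le_max_left _ _
  have hm2 : r₂ ≤ max r₁ r₂ := le_max_right _ _
  have h1e : 1 ≤ exp s := Real.one_le_exp hs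
  have h2e : exp (-s) ≤ 1 := Real.exp_le_one_iff.mpr (by linarith)
  have hprod : exp s * exp (-s) = 1 := by rw [← Real.exp_add]; simp
  have hr1sq : r₁ ^ 2 ≤ r₁ * r₂ * exp s := le_trans (by nlinarith) hR
  have hr2sq : r₂ ^ 2 ≤ r₁ * r₂ * exp s := le_trans (by nlinarith) hR
  have hee : r₁ * (r₂ * exp (-s)) ≤ r₁ * r₂ * exp s := by nlinarith [exp_pos (-s)]
  nlinarith [exp_pos s, exp_pos (-s)]

lemma four_rpow_half (R : ℝ) (hR : 0 ≤ R) : (4 * R) ^ ((1:ℝ)/2) = 2 * R ^ ((1:ℝ)/2) := by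
  rw [Real.mul_rpow (by norm_num) hR]
  congr 1
  rw [show (4:ℝ) = 2 ^ (2:ℕ) by norm_num, ← Real.rpow_natCast 2 2,
    ← Real.rpow_mul (by norm_num)]
  norm_num

/-- Whenever `r₁, r₂ ≥ 1`, `s ≥ 0` and `r₁r₂e^s ≥ (max{r₁,r₂})²`, the `s`-derivatives of
`|𝐧_s|` satisfy `|(d/ds)^j |𝐧_s|| ≤ C_j (r₁r₂e^s)^{1/2}` and those of its reciprocal satisfy
`|(d/ds)^k (1/|𝐧_s|)| ≤ C_k / |𝐧_s|`. -/
theorem nNorm_deriv_bounds :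
    (∀ j : ℕ, ∃ C : ℝ, 0 < C ∧ ∀ r₁ r₂ s : ℝ, 1 ≤ r₁ → 1 ≤ r₂ → 0 ≤ s →
        (max r₁ r₂) ^ 2 ≤ r₁ * r₂ * Real.exp s →
        |iteratedDeriv j (fun u => nNorm r₁ r₂ u) s| ≤
          C * (r₁ * r₂ * Real.exp s) ^ ((1 : ℝ) / 2)) ∧
    (∀ k : ℕ, ∃ C : ℝ, 0 < C ∧ ∀ r₁ r₂ s : ℝ, 1 ≤ r₁ → 1 ≤ r₂ → 0 ≤ s →
        (max r₁ r₂) ^ 2 ≤ r₁ * r₂ * Real.exp s →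
        |iteratedDeriv k (fun u => (nNorm r₁ r₂ u)⁻¹) s| ≤ C / nNorm r₁ r₂ s) := by
  constructor
  · intro j
    obtain ⟨L, hL⟩ := iter_repr ((1:ℝ)/2) j
    set K := (L.map fun q => |q.1|).sum with hK
    have hK0 : 0 ≤ K := coefsum_nonneg L
    refine ⟨2 * K + 1, by linarith, fun r₁ r₂ s h1 h2 hs hR => ?_⟩
    have hfun : (fun u => nNorm r₁ r₂ u) = lsum ((1:ℝ)/2) r₁ r₂ [(1,0,0)] :=
      funext fun t => by rw [nNorm_eq r₁ r₂ t h1 h2, lsum_base]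
    have hRpos : 0 < r₁ * r₂ * exp s := by positivity
    have huv := uv_le r₁ r₂ s h1 h2 hs hR
    have huvp : (0:ℝ) < (r₁ + r₂ * exp s) * (r₁ + r₂ * exp (-s)) :=
      mul_pos (upos h1 h2) (upos h1 h2)
    rw [hfun, hL r₁ r₂ h1 h2 s]
    calc |lsum ((1:ℝ)/2) r₁ r₂ L s|
        ≤ K * ((r₁ + r₂ * exp s) * (r₁ + r₂ * exp (-s))) ^ ((1:ℝ)/2) :=
          lsum_abs_le _ r₁ r₂ h1 h2 L s
      _ ≤ K * (4 * (r₁ * r₂ * exp s)) ^ ((1:ℝ)/2) := by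
          apply mul_le_mul_of_nonneg_left _ hK0
          exact Real.rpow_le_rpow huvp.le huv (by norm_num)
      _ = K * (2 * (r₁ * r₂ * exp s) ^ ((1:ℝ)/2)) := by
          rw [four_rpow_half _ hRpos.le]
      _ ≤ (2 * K + 1) * (r₁ * r₂ * exp s) ^ ((1:ℝ)/2) := by
          have := Real.rpow_nonneg hRpos.le ((1:ℝ)/2)
          nlinarith
  · intro k
    obtain ⟨L, hL⟩ := iter_repr (-((1:ℝ)/2)) k
    set K := (L.map fun q => |q.1|).sum with hK
    have hK0 : 0 ≤ K := coefsum_nonneg L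
    refine ⟨K + 1, by linarith, fun r₁ r₂ s h1 h2 hs hR => ?_⟩
    have hup := upos (s := s) h1 h2
    have hvp := upos (s := -s) h1 h2
    have hN : 0 < nNorm r₁ r₂ s := by
      rw [nNorm_eq r₁ r₂ s h1 h2]
      exact mul_pos (Real.rpow_pos_of_pos hup _) (Real.rpow_pos_of_pos hvp _)
    have hfun : (fun u => (nNorm r₁ r₂ u)⁻¹) = lsum (-((1:ℝ)/2)) r₁ r₂ [(1,0,0)] :=
      funext fun t => by
        rw [nNorm_eq r₁ r₂ t h1 h2, lsum_base,
          Real.rpow_neg (upos (s := t) h1 h2).le, Real.rpow_neg (upos (s := -t) h1 h2).le,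
          mul_inv]
    rw [hfun, hL r₁ r₂ h1 h2 s]
    calc |lsum (-((1:ℝ)/2)) r₁ r₂ L s|
        ≤ K * ((r₁ + r₂ * exp s) * (r₁ + r₂ * exp (-s))) ^ (-((1:ℝ)/2)) :=
          lsum_abs_le _ r₁ r₂ h1 h2 L s
      _ = K / nNorm r₁ r₂ s := by
          rw [Real.rpow_neg (mul_pos hup hvp).le, nNorm_eq r₁ r₂ s h1 h2,
            ← Real.mul_rpow hup.le hvp.le]
          exact (div_eq_mul_inv _ _).symm
      _ ≤ (K + 1) / nNorm r₁ r₂ s := by gcongr; linarith
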